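/- Let A, B, C > 0. Suppose u : (0,δ) → ℝ satisfies u(z) = −(ACB/(2(A + B)²))z² + O(z³) as z → 0⁺, and define v²(z) = (4u(z)³ + 3Au(z)²z + 2u(z)z(A + B) + ACz³)/(4u(z) + Az). Then v²(z) = (CA/(A + B))z² + O(z³), and (1 + u(z))² + v²(z) = 1 + (CA²/(A + B)²)z² + O(z³) as z → 0⁺. In particular there exists δ₄ > 0 such that (1 + u(z))² + v²(z) > 1 for 0 < z < δ₄. -/

import Mathlib

set_option maxHeartbeats 1000000


open Filter Asymptotics

/-- Asymptotic squared modulus of the second root pair. -/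
theorem stmt_15 (A B C δ : ℝ) (hA : 0 < A) (hB : 0 < B) (hC : 0 < C) (hδ : 0 < δ)
    (u : ℝ → ℝ)
    (hu : (fun z => u z - (-(A * C * B / (2 * (A + B) ^ 2)) * z ^ 2))
      =O[nhdsWithin 0 (Set.Ioi 0)] fun z => z ^ 3) :
    (((fun z => (4 * u z ^ 3 + 3 * A * u z ^ 2 * z + 2 * u z * z * (A + B) + A * C * z ^ 3)
          / (4 * u z + A * z) - C * A / (A + B) * z ^ 2)
        =O[nhdsWithin 0 (Set.Ioi 0)] fun z => z ^ 3)
      ∧ ((fun z => (1 + u z) ^ 2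
            + (4 * u z ^ 3 + 3 * A * u z ^ 2 * z + 2 * u z * z * (A + B) + A * C * z ^ 3)
              / (4 * u z + A * z)
            - (1 + C * A ^ 2 / (A + B) ^ 2 * z ^ 2))
          =O[nhdsWithin 0 (Set.Ioi 0)] fun z => z ^ 3)
      ∧ ∃ δ₄ > 0, ∀ z : ℝ, 0 < z → z < δ₄ →
          1 < (1 + u z) ^ 2
            + (4 * u z ^ 3 + 3 * A * u z ^ 2 * z + 2 * u z * z * (A + B) + A * C * z ^ 3)
              / (4 * u z + A * z)) := by
  have hAB : (0:ℝ) < A + B := by linarith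
  have hABne : A + B ≠ 0 := ne_of_gt hAB
  set l := nhdsWithin (0:ℝ) (Set.Ioi 0) with hl
  set k : ℝ := A * C * B / (2 * (A + B) ^ 2) with hk
  set K1 : ℝ := C * A / (A + B) with hK1
  set K2 : ℝ := C * A ^ 2 / (A + B) ^ 2 with hK2
  have hkpos : 0 < k := by rw [hk]; positivity
  have hK1pos : 0 < K1 := by rw [hK1]; positivity
  have hK2pos : 0 < K2 := by rw [hK2]; positivity
  obtain ⟨c, hcpos, hcO⟩ := hu.exists_pos
  have hcb : ∀ᶠ z in l, |u z + k * z ^ 2| ≤ c * |z| ^ 3 := by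
    filter_upwards [hcO.bound] with z hz
    have he : u z - -k * z ^ 2 = u z + k * z ^ 2 := by ring
    calc |u z + k * z ^ 2| = ‖u z - -k * z ^ 2‖ := by rw [Real.norm_eq_abs, he]
      _ ≤ c * ‖z ^ 3‖ := hz
      _ = c * |z| ^ 3 := by rw [Real.norm_eq_abs, abs_pow]
  set c1 : ℝ := c + k with hc1
  have hc1pos : 0 < c1 := by rw [hc1]; positivity
  set M : ℝ := 4 * c1 ^ 3 + 3 * A * c1 ^ 2 + 4 * K1 * c1 + 2 * (A + B) * c with hM
  have hMpos : 0 < M := by rw [hM]; positivity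
  set M2 : ℝ := 2 * c + c1 ^ 2 + 2 * M / A with hM2
  have hM2pos : 0 < M2 := by rw [hM2]; positivity
  clear_value l k K1 K2 c1 M M2
  have hev : ∀ r : ℝ, 0 < r → ∀ᶠ z in l, |z| < r := by
    intro r hr
    have h := eventually_abs_sub_lt (0:ℝ) hr
    simp only [sub_zero] at h
    rw [hl]
    exact h.filter_mono nhdsWithin_le_nhds
  have hpos : ∀ᶠ z in l, z ∈ Set.Ioi (0:ℝ) := by
    rw [hl]; exact eventually_mem_nhdsWithin
  -- the main eventual estimates
  have main : ∀ᶠ z in l, 0 < z ∧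
      |(4 * u z ^ 3 + 3 * A * u z ^ 2 * z + 2 * u z * z * (A + B) + A * C * z ^ 3)
          / (4 * u z + A * z) - K1 * z ^ 2| ≤ 2 * M / A * z ^ 3 ∧
      |(1 + u z) ^ 2 + (4 * u z ^ 3 + 3 * A * u z ^ 2 * z + 2 * u z * z * (A + B) + A * C * z ^ 3)
          / (4 * u z + A * z) - (1 + K2 * z ^ 2)| ≤ M2 * z ^ 3 := by
    have hεpos : 0 < min 1 (A / (8 * c1)) := by positivity
    filter_upwards [hcb, hev _ hεpos, hpos] with z hzc hzε hzpos
    have hz : (0:ℝ) < z := hzpos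
    have habs : |z| = z := abs_of_pos hz
    rw [habs, lt_min_iff] at hzε
    obtain ⟨hz1, hzA⟩ := hzε
    have hz1le : z ≤ 1 := le_of_lt hz1
    rw [habs] at hzc
    -- |u z| ≤ c1 * z^2
    have hu2 : |u z| ≤ c1 * z ^ 2 := by
      have h := abs_add_le (u z + k * z ^ 2) (-(k * z ^ 2))
      have he : u z + k * z ^ 2 + -(k * z ^ 2) = u z := by ring
      rw [he, abs_neg, abs_of_pos (by positivity : (0:ℝ) < k * z ^ 2)] at h
      have h3 : z ^ 3 ≤ z ^ 2 := pow_le_pow_of_le_one hz.le hz1le (by norm_num)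
      have hcz : c * z ^ 3 ≤ c * z ^ 2 := by nlinarith
      rw [hc1]
      nlinarith [le_trans h (by linarith : |u z + k * z ^ 2| + k * z ^ 2 ≤ c * z ^ 3 + k * z ^ 2)]
    obtain ⟨hul, hur⟩ := abs_le.mp hu2
    -- lower bound on denominator
    have h8 : c1 * z ^ 2 ≤ A / 8 * z := by
      have hlt8 : z * (8 * c1) < A := (lt_div_iff₀ (by positivity)).mp hzA
      have h2' : z * (z * (8 * c1)) ≤ z * A := le_of_lt (mul_lt_mul_of_pos_left hlt8 hz)
      have he : z * (z * (8 * c1)) = 8 * (c1 * z ^ 2) := by ring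
      rw [he] at h2'
      linarith
    have hD : A / 2 * z ≤ 4 * u z + A * z := by linarith
    have hDpos : 0 < 4 * u z + A * z := lt_of_lt_of_le (by positivity) hD
    have hDne : 4 * u z + A * z ≠ 0 := ne_of_gt hDpos
    -- power comparisons
    have hz64 : z ^ 6 ≤ z ^ 4 := pow_le_pow_of_le_one hz.le hz1le (by norm_num)
    have hz54 : z ^ 5 ≤ z ^ 4 := pow_le_pow_of_le_one hz.le hz1le (by norm_num)
    have hz43 : z ^ 4 ≤ z ^ 3 := pow_le_pow_of_le_one hz.le hz1le (by norm_num)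
    -- bounds on powers of u
    have hupow3 : |u z| ^ 3 ≤ c1 ^ 3 * z ^ 6 := by
      calc |u z| ^ 3 ≤ (c1 * z ^ 2) ^ 3 := pow_le_pow_left₀ (abs_nonneg _) hu2 3
        _ = c1 ^ 3 * z ^ 6 := by ring
    have hupow2 : |u z| ^ 2 ≤ c1 ^ 2 * z ^ 4 := by
      calc |u z| ^ 2 ≤ (c1 * z ^ 2) ^ 2 := pow_le_pow_left₀ (abs_nonneg _) hu2 2
        _ = c1 ^ 2 * z ^ 4 := by ring
    -- the key polynomial Q and its bound
    set Q : ℝ := 4 * u z ^ 3 + 3 * A * u z ^ 2 * z - 4 * K1 * u z * z ^ 2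
        + 2 * (A + B) * z * (u z + k * z ^ 2) with hQdef
    have hb1 : |4 * u z ^ 3| ≤ 4 * (c1 ^ 3 * z ^ 6) := by
      rw [abs_mul, abs_pow]
      have h4 : |(4:ℝ)| = 4 := by norm_num
      rw [h4]; linarith
    have hb2 : |3 * A * u z ^ 2 * z| ≤ 3 * A * (c1 ^ 2 * z ^ 4) * z := by
      rw [abs_mul, abs_mul, abs_mul, abs_pow, abs_of_pos hz, abs_of_pos hA,
        abs_of_nonneg (by norm_num : (0:ℝ) ≤ 3)]
      exact mul_le_mul_of_nonneg_right
        (mul_le_mul_of_nonneg_left hupow2 (by positivity : (0:ℝ) ≤ 3 * A)) hz.le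
    have hb3 : |4 * K1 * u z * z ^ 2| ≤ 4 * K1 * (c1 * z ^ 2) * z ^ 2 := by
      rw [abs_mul, abs_mul, abs_mul, abs_pow, abs_of_pos hz, abs_of_pos hK1pos,
        abs_of_nonneg (by norm_num : (0:ℝ) ≤ 4)]
      exact mul_le_mul_of_nonneg_right
        (mul_le_mul_of_nonneg_left hu2 (by positivity : (0:ℝ) ≤ 4 * K1)) (by positivity)
    have hb4 : |2 * (A + B) * z * (u z + k * z ^ 2)| ≤ 2 * (A + B) * z * (c * z ^ 3) := by
      rw [abs_mul, abs_mul, abs_mul, abs_of_pos hz, abs_of_pos hAB,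
        abs_of_nonneg (by norm_num : (0:ℝ) ≤ 2)]
      exact mul_le_mul_of_nonneg_left hzc (by positivity)
    have tri : |Q| ≤ |4 * u z ^ 3| + |3 * A * u z ^ 2 * z| + |4 * K1 * u z * z ^ 2|
        + |2 * (A + B) * z * (u z + k * z ^ 2)| := by
      rw [hQdef]
      calc |4 * u z ^ 3 + 3 * A * u z ^ 2 * z - 4 * K1 * u z * z ^ 2
            + 2 * (A + B) * z * (u z + k * z ^ 2)|
          ≤ |4 * u z ^ 3 + 3 * A * u z ^ 2 * z - 4 * K1 * u z * z ^ 2|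
            + |2 * (A + B) * z * (u z + k * z ^ 2)| := abs_add_le _ _
        _ ≤ |4 * u z ^ 3 + 3 * A * u z ^ 2 * z| + |4 * K1 * u z * z ^ 2|
            + |2 * (A + B) * z * (u z + k * z ^ 2)| := by
              linarith [abs_sub (4 * u z ^ 3 + 3 * A * u z ^ 2 * z) (4 * K1 * u z * z ^ 2)]
        _ ≤ _ := by linarith [abs_add_le (4 * u z ^ 3) (3 * A * u z ^ 2 * z)]
    have hQb : |Q| ≤ M * z ^ 4 := by
      rw [hM]
      calc |Q| ≤ 4 * (c1 ^ 3 * z ^ 6) + 3 * A * (c1 ^ 2 * z ^ 4) * z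
            + 4 * K1 * (c1 * z ^ 2) * z ^ 2 + 2 * (A + B) * z * (c * z ^ 3) := by
              linarith [tri, hb1, hb2, hb3, hb4]
        _ ≤ (4 * c1 ^ 3 + 3 * A * c1 ^ 2 + 4 * K1 * c1 + 2 * (A + B) * c) * z ^ 4 := by
              nlinarith [mul_le_mul_of_nonneg_left hz64 (by positivity : (0:ℝ) ≤ 4 * c1 ^ 3),
                mul_le_mul_of_nonneg_left hz54 (by positivity : (0:ℝ) ≤ 3 * A * c1 ^ 2)]
    -- key algebraic identity
    have keyId : (4 * u z ^ 3 + 3 * A * u z ^ 2 * z + 2 * u z * z * (A + B) + A * C * z ^ 3)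
        - K1 * z ^ 2 * (4 * u z + A * z) = Q := by
      rw [hQdef, hK1, hk]
      field_simp
      ring
    have hdiff : (4 * u z ^ 3 + 3 * A * u z ^ 2 * z + 2 * u z * z * (A + B) + A * C * z ^ 3)
        / (4 * u z + A * z) - K1 * z ^ 2 = Q / (4 * u z + A * z) := by
      rw [div_sub' hDne]
      congr 1
      linarith [keyId]
    have habs1 : |(4 * u z ^ 3 + 3 * A * u z ^ 2 * z + 2 * u z * z * (A + B) + A * C * z ^ 3)
        / (4 * u z + A * z) - K1 * z ^ 2| ≤ 2 * M / A * z ^ 3 := by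
      rw [hdiff, abs_div, abs_of_pos hDpos]
      calc |Q| / (4 * u z + A * z) ≤ M * z ^ 4 / (A / 2 * z) :=
            div_le_div₀ (by positivity) hQb (by positivity) hD
        _ = 2 * M / A * z ^ 3 := by field_simp
    -- second estimate
    have hco : K1 = K2 + 2 * k := by
      rw [hK1, hK2, hk]
      field_simp
    have e2eq : (1 + u z) ^ 2
        + (4 * u z ^ 3 + 3 * A * u z ^ 2 * z + 2 * u z * z * (A + B) + A * C * z ^ 3)
          / (4 * u z + A * z) - (1 + K2 * z ^ 2)
        = 2 * (u z + k * z ^ 2) + u z ^ 2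
          + ((4 * u z ^ 3 + 3 * A * u z ^ 2 * z + 2 * u z * z * (A + B) + A * C * z ^ 3)
            / (4 * u z + A * z) - K1 * z ^ 2) := by
      linear_combination z ^ 2 * hco
    have b1 : |2 * (u z + k * z ^ 2)| ≤ 2 * (c * z ^ 3) := by
      rw [abs_mul, abs_of_nonneg (by norm_num : (0:ℝ) ≤ 2)]
      linarith
    have b2 : |u z ^ 2| ≤ c1 ^ 2 * z ^ 4 := by
      rw [abs_pow]; exact hupow2
    have habs2 : |(1 + u z) ^ 2
        + (4 * u z ^ 3 + 3 * A * u z ^ 2 * z + 2 * u z * z * (A + B) + A * C * z ^ 3)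
          / (4 * u z + A * z) - (1 + K2 * z ^ 2)| ≤ M2 * z ^ 3 := by
      rw [e2eq]
      have tri2 : |2 * (u z + k * z ^ 2) + u z ^ 2
          + ((4 * u z ^ 3 + 3 * A * u z ^ 2 * z + 2 * u z * z * (A + B) + A * C * z ^ 3)
            / (4 * u z + A * z) - K1 * z ^ 2)|
          ≤ |2 * (u z + k * z ^ 2)| + |u z ^ 2|
          + |(4 * u z ^ 3 + 3 * A * u z ^ 2 * z + 2 * u z * z * (A + B) + A * C * z ^ 3)
            / (4 * u z + A * z) - K1 * z ^ 2| := by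
        calc _ ≤ |2 * (u z + k * z ^ 2) + u z ^ 2|
            + |(4 * u z ^ 3 + 3 * A * u z ^ 2 * z + 2 * u z * z * (A + B) + A * C * z ^ 3)
              / (4 * u z + A * z) - K1 * z ^ 2| := abs_add_le _ _
          _ ≤ _ := by linarith [abs_add_le (2 * (u z + k * z ^ 2)) (u z ^ 2)]
      have hc14 : c1 ^ 2 * z ^ 4 ≤ c1 ^ 2 * z ^ 3 :=
        mul_le_mul_of_nonneg_left hz43 (by positivity)
      rw [hM2]
      linarith
    exact ⟨hz, habs1, habs2⟩
  refine ⟨?_, ?_, ?_⟩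
  · rw [isBigO_iff]
    refine ⟨2 * M / A, ?_⟩
    filter_upwards [main] with z hzm
    obtain ⟨hz, h1, _⟩ := hzm
    rw [Real.norm_eq_abs, Real.norm_eq_abs, abs_of_pos (pow_pos hz 3)]
    exact h1
  · rw [isBigO_iff]
    refine ⟨M2, ?_⟩
    filter_upwards [main] with z hzm
    obtain ⟨hz, _, h2⟩ := hzm
    rw [Real.norm_eq_abs, Real.norm_eq_abs, abs_of_pos (pow_pos hz 3)]
    exact h2
  · have hlt := hev (K2 / M2) (by positivity)
    have fin : ∀ᶠ z in l, 1 < (1 + u z) ^ 2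
        + (4 * u z ^ 3 + 3 * A * u z ^ 2 * z + 2 * u z * z * (A + B) + A * C * z ^ 3)
          / (4 * u z + A * z) := by
      filter_upwards [main, hlt] with z hzm hk2
      obtain ⟨hz, _, h2⟩ := hzm
      rw [abs_of_pos hz] at hk2
      have hK2M : M2 * z < K2 := by
        rw [lt_div_iff₀ hM2pos] at hk2; linarith
      have h2' := (abs_le.mp h2).1
      nlinarith [mul_lt_mul_of_pos_right hK2M (pow_pos hz 2), pow_pos hz 2]
    rw [hl, eventually_nhdsWithin_iff] at fin
    obtain ⟨ε, hεpos, hball⟩ := Metric.eventually_nhds_iff.mp fin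
    refine ⟨ε, hεpos, fun z hz0 hzε => ?_⟩
    have hd : dist z 0 < ε := by
      rw [Real.dist_eq, sub_zero, abs_of_pos hz0]; exact hzε
    exact hball hd (Set.mem_Ioi.mpr hz0)
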